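/- Suppose F = f + Ψ where f : ℝⁿ → ℝ is α-strongly convex (α > 0) and L-smooth (L ≥ α) and Ψ : ℝⁿ → ℝ ∪ {+∞} is proper, closed and convex, and let x* be the minimizer of F. Suppose {M_k}_{k≥1} is a sequence of affine subspaces of ℝⁿ and {x_k}, {y_k}, {z_k} are sequences such that for each k ≥ 1: (i) y_k minimizes ‖y − x*‖ over y ∈ M_k; (ii) x_k minimizes F over M_k; (iii) z_k ∈ M_k satisfies ⟨G_{1/L}(z_k), y_k − z_k⟩ ≥ 0 and F(z̄_k) ≤ F(x_k) − (1/(2L))‖G_{1/L}(z_k)‖², where z̄_k = z_k − G_{1/L}(z_k)/L; and (iv) M_{k+1} contains the affine set z_k + span{y_k − z_k, G_{1/L}(z_k)}. Define the potential Φ_k = ‖y_k − x*‖² + 2(F(x_k) − F(x*))/α. Then for every k ≥ 1, Φ_{k+1} ≤ (1 − √(α/L)) Φ_k. -/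

import Mathlib

open scoped RealInnerProductSpace

private lemma aux_eps (a b c : ℝ) (hc : 0 ≤ c)
    (h : ∀ ε : ℝ, 0 < ε → ε ≤ 1 → a ≤ b + ε * c) : a ≤ b := by
  by_contra hab
  push_neg at hab
  rcases eq_or_lt_of_le hc with hc0 | hc0
  · have := h 1 one_pos le_rfl; nlinarith
  · have hε : 0 < min 1 ((a - b) / (2 * c)) :=
      lt_min one_pos (div_pos (by linarith) (by linarith))
    have h1 := h _ hε (min_le_left _ _)
    have h2 : min 1 ((a - b) / (2 * c)) * c ≤ (a - b) / (2 * c) * c :=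
      mul_le_mul_of_nonneg_right (min_le_right _ _) hc0.le
    have h3 : (a - b) / (2 * c) * c = (a - b) / 2 := by field_simp
    linarith

set_option maxHeartbeats 1000000 in
/-- potential decrease for the idealized algorithmic framework
in the strongly convex composite setting: `Φ_{k+1} ≤ (1 − √(α/L)) Φ_k`. -/
theorem idealized_algorithm_strongly_convex_potential {n : ℕ} (L α : ℝ)
    (hα : 0 < α) (hαL : α ≤ L)
    (f : EuclideanSpace ℝ (Fin n) → ℝ)
    (f' : EuclideanSpace ℝ (Fin n) → EuclideanSpace ℝ (Fin n))
    (hdiff : ∀ x, HasGradientAt f (f' x) x)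
    (hsmooth : ∀ x y : EuclideanSpace ℝ (Fin n),
      |f x - f y - ⟪f' y, x - y⟫| ≤ L / 2 * ‖x - y‖ ^ 2)
    (hstrong : ∀ x y : EuclideanSpace ℝ (Fin n),
      f x + ⟪f' x, y - x⟫ + α / 2 * ‖y - x‖ ^ 2 ≤ f y)
    (Ψ : EuclideanSpace ℝ (Fin n) → EReal)
    (hproper : (∀ x, Ψ x ≠ ⊥) ∧ (∃ x, Ψ x ≠ ⊤))
    (hclosed : LowerSemicontinuous Ψ)
    (hconvex : ∀ x y : EuclideanSpace ℝ (Fin n), ∀ a b : ℝ, 0 ≤ a → 0 ≤ b → a + b = 1 →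
      Ψ (a • x + b • y) ≤ (a : EReal) * Ψ x + (b : EReal) * Ψ y)
    (prox : ℝ → EuclideanSpace ℝ (Fin n) → EuclideanSpace ℝ (Fin n))
    (hprox : ∀ t : ℝ, 0 < t → ∀ x z : EuclideanSpace ℝ (Fin n),
      Ψ (prox t x) + ((‖x - prox t x‖ ^ 2 / (2 * t) : ℝ) : EReal)
        ≤ Ψ z + ((‖x - z‖ ^ 2 / (2 * t) : ℝ) : EReal))
    (F : EuclideanSpace ℝ (Fin n) → EReal)
    (hF : ∀ x, F x = (f x : EReal) + Ψ x)
    (G : ℝ → EuclideanSpace ℝ (Fin n) → EuclideanSpace ℝ (Fin n))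
    (hG : ∀ t x, G t x = t⁻¹ • (x - prox t (x - t • f' x)))
    (xstar : EuclideanSpace ℝ (Fin n)) (hxstar : ∀ w, F xstar ≤ F w)
    (M : ℕ → AffineSubspace ℝ (EuclideanSpace ℝ (Fin n)))
    (x y z : ℕ → EuclideanSpace ℝ (Fin n))
    (hy : ∀ k, 1 ≤ k → y k ∈ M k ∧ ∀ w ∈ M k, ‖y k - xstar‖ ≤ ‖w - xstar‖)
    (hx : ∀ k, 1 ≤ k → x k ∈ M k ∧ ∀ w ∈ M k, F (x k) ≤ F w)
    (hz : ∀ k, 1 ≤ k → z k ∈ M k ∧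
      0 ≤ ⟪G (1 / L) (z k), y k - z k⟫ ∧
      F (z k - (1 / L) • G (1 / L) (z k))
        ≤ F (x k) - ((1 / (2 * L) * ‖G (1 / L) (z k)‖ ^ 2 : ℝ) : EReal))
    (hM : ∀ k, 1 ≤ k → ∀ a c : ℝ,
      z k + a • (y k - z k) + c • G (1 / L) (z k) ∈ M (k + 1)) :
    ∀ k, 1 ≤ k →
      ((‖y (k + 1) - xstar‖ ^ 2 : ℝ) : EReal)
          + ((2 / α : ℝ) : EReal) * (F (x (k + 1)) - F xstar)
        ≤ ((1 - Real.sqrt (α / L) : ℝ) : EReal)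
          * (((‖y k - xstar‖ ^ 2 : ℝ) : EReal)
              + ((2 / α : ℝ) : EReal) * (F (x k) - F xstar)) := by
  intro k hk
  obtain ⟨hΨbot, w0, hw0⟩ := hproper
  have hL : (0:ℝ) < L := lt_of_lt_of_le hα hαL
  have ht : (0:ℝ) < 1 / L := by positivity
  obtain ⟨hzM, hzy, hzF⟩ := hz k hk
  obtain ⟨hyM, hymin⟩ := hy k hk
  obtain ⟨hy1M, hy1min⟩ := hy (k + 1) (by omega)
  obtain ⟨hx1M, hx1min⟩ := hx (k + 1) (by omega)
  set g : EuclideanSpace ℝ (Fin n) := G (1 / L) (z k) with hgdef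
  set zb : EuclideanSpace ℝ (Fin n) := z k - (1 / L) • g with hzbdef
  set v : EuclideanSpace ℝ (Fin n) := z k - (1 / L) • f' (z k) with hvdef
  -- zb is the prox point
  have hzb_prox : zb = prox (1 / L) v := by
    rw [hzbdef, hgdef, hG, smul_inv_smul₀ (ne_of_gt ht), sub_sub_cancel]
  -- Ψ finiteness facts
  have hfin : ∀ (X : EReal) (r : ℝ), X ≠ ⊤ → X ≠ ⊥ → X + (r : EReal) ≠ ⊤ := by
    intro X r hX hX'
    rw [← EReal.coe_toReal hX hX', ← EReal.coe_add]
    exact EReal.coe_ne_top _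
  have hΨprox_ne_top : ∀ u, Ψ (prox (1 / L) u) ≠ ⊤ := by
    intro u htop
    have h1 := hprox (1 / L) ht u w0
    rw [htop, EReal.top_add_coe, top_le_iff] at h1
    exact hfin (Ψ w0) _ hw0 (hΨbot w0) h1
  have hΨzb_ne_top : Ψ zb ≠ ⊤ := by rw [hzb_prox]; exact hΨprox_ne_top v
  have hF_ne_bot : ∀ w, F w ≠ ⊥ := by
    intro w h
    rw [hF] at h
    rcases EReal.add_eq_bot_iff.mp h with h | h
    · exact EReal.coe_ne_bot _ h
    · exact hΨbot w h
  have hFw0_ne_top : F w0 ≠ ⊤ := by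
    rw [hF, add_comm]; exact hfin _ _ hw0 (hΨbot w0)
  have hFs_ne_top : F xstar ≠ ⊤ := ne_top_of_le_ne_top hFw0_ne_top (hxstar w0)
  have hΨs_ne_top : Ψ xstar ≠ ⊤ := by
    intro h
    apply hFs_ne_top
    rw [hF, h, EReal.coe_add_top]
  have hFzb_ne_top : F zb ≠ ⊤ := by rw [hF, add_comm]; exact hfin _ _ hΨzb_ne_top (hΨbot zb)
  -- real values
  set ψs : ℝ := (Ψ xstar).toReal with hψs
  set ψb : ℝ := (Ψ zb).toReal with hψb
  have hΨs_eq : Ψ xstar = (ψs : EReal) := (EReal.coe_toReal hΨs_ne_top (hΨbot xstar)).symm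
  have hΨb_eq : Ψ zb = (ψb : EReal) := (EReal.coe_toReal hΨzb_ne_top (hΨbot zb)).symm
  have hFs_eq : F xstar = ((f xstar + ψs : ℝ) : EReal) := by rw [hF, hΨs_eq, EReal.coe_add]
  have hFb_eq : F zb = ((f zb + ψb : ℝ) : EReal) := by rw [hF, hΨb_eq, EReal.coe_add]
  -- prox subgradient inequality
  have hsub : ψb + L * ⟪v - zb, xstar - zb⟫ ≤ ψs := by
    apply aux_eps _ _ (L * ‖xstar - zb‖ ^ 2 / 2) (by positivity)
    intro ε hε hε1
    set wε : EuclideanSpace ℝ (Fin n) := (1 - ε) • zb + ε • xstar with hwε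
    have hconv := hconvex zb xstar (1 - ε) ε (by linarith) hε.le (by ring)
    rw [hΨb_eq, hΨs_eq, ← EReal.coe_mul, ← EReal.coe_mul, ← EReal.coe_add] at hconv
    have hwε_ne_top : Ψ wε ≠ ⊤ := ne_top_of_le_ne_top (EReal.coe_ne_top _) hconv
    set ψε : ℝ := (Ψ wε).toReal with hψε
    have hψε_le : ψε ≤ (1 - ε) * ψb + ε * ψs :=
      EReal.toReal_le_toReal hconv (hΨbot wε) (EReal.coe_ne_top _)
    have hΨε_eq : Ψ wε = (ψε : EReal) := (EReal.coe_toReal hwε_ne_top (hΨbot wε)).symm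
    have hpx := hprox (1 / L) ht v wε
    rw [← hzb_prox, hΨb_eq, hΨε_eq, ← EReal.coe_add, ← EReal.coe_add,
      EReal.coe_le_coe_iff] at hpx
    -- norm expansions
    have hwvec : v - wε = (v - zb) - ε • (xstar - zb) := by
      rw [hwε]; module
    have hexp : ‖v - wε‖ ^ 2
        = ‖v - zb‖ ^ 2 - 2 * ε * ⟪v - zb, xstar - zb⟫ + ε ^ 2 * ‖xstar - zb‖ ^ 2 := by
      rw [hwvec, norm_sub_sq_real, real_inner_smul_right, norm_smul,
        Real.norm_eq_abs, abs_of_pos hε]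
      ring
    have hc1 : ‖v - zb‖ ^ 2 / (2 * (1 / L)) = L / 2 * ‖v - zb‖ ^ 2 := by
      field_simp
    have hc2 : ‖v - wε‖ ^ 2 / (2 * (1 / L)) = L / 2 * ‖v - wε‖ ^ 2 := by
      field_simp
    rw [hc1, hc2, hexp] at hpx
    have hcomb : ε * (ψb + L * ⟪v - zb, xstar - zb⟫)
        ≤ ε * (ψs + ε * (L * ‖xstar - zb‖ ^ 2 / 2)) := by nlinarith
    exact le_of_mul_le_mul_left hcomb hε
  -- composite descent inequality
  have hkey1 : f zb + ψb ≤ f xstar + ψs - ⟪g, xstar - z k⟫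
      - ‖g‖ ^ 2 / (2 * L) - α / 2 * ‖xstar - z k‖ ^ 2 := by
    have hv1 : zb - z k = -((1 / L) • g) := by rw [hzbdef]; module
    have hv2 : v - zb = (1 / L) • g - (1 / L) • f' (z k) := by rw [hvdef, hzbdef]; module
    have hv3 : xstar - zb = (xstar - z k) + (1 / L) • g := by rw [hzbdef]; module
    have hsm := (abs_le.mp (hsmooth zb (z k))).2
    have hst := hstrong (z k) xstar
    have hi1 : ⟪f' (z k), zb - z k⟫ = -(1 / L * ⟪f' (z k), g⟫) := by
      rw [hv1, inner_neg_right, real_inner_smul_right]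
    have hn : ‖zb - z k‖ ^ 2 = 1 / L ^ 2 * ‖g‖ ^ 2 := by
      rw [hv1, norm_neg, norm_smul, Real.norm_eq_abs, abs_of_pos ht]
      ring
    rw [hi1, hn] at hsm
    have hns : ‖(1 / L : ℝ) • g‖ ^ 2 = 1 / L ^ 2 * ‖g‖ ^ 2 := by
      rw [norm_smul, Real.norm_eq_abs, abs_of_pos ht]
      ring
    have hi2 : ⟪v - zb, xstar - zb⟫
        = 1 / L * ⟪g, xstar - z k⟫ + 1 / L ^ 2 * ‖g‖ ^ 2
          - 1 / L * ⟪f' (z k), xstar - z k⟫ - 1 / L ^ 2 * ⟪f' (z k), g⟫ := by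
      rw [hv2, hv3]
      simp only [inner_sub_left, inner_add_right, real_inner_smul_left,
        real_inner_smul_right, real_inner_self_eq_norm_sq, hns]
      ring
    rw [hi2] at hsub
    have hL' : L ≠ 0 := ne_of_gt hL
    have e1 : L * (1 / L * ⟪g, xstar - z k⟫ + 1 / L ^ 2 * ‖g‖ ^ 2
          - 1 / L * ⟪f' (z k), xstar - z k⟫ - 1 / L ^ 2 * ⟪f' (z k), g⟫)
        = ⟪g, xstar - z k⟫ + 1 / L * ‖g‖ ^ 2
          - ⟪f' (z k), xstar - z k⟫ - 1 / L * ⟪f' (z k), g⟫ := by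
      field_simp
    rw [e1] at hsub
    have e2 : L / 2 * (1 / L ^ 2 * ‖g‖ ^ 2) = 1 / (2 * L) * ‖g‖ ^ 2 := by
      field_simp
    rw [e2] at hsm
    have e3 : ‖g‖ ^ 2 / (2 * L) = 1 / (2 * L) * ‖g‖ ^ 2 := by ring
    have e4 : 1 / L * ‖g‖ ^ 2 = 2 * (1 / (2 * L) * ‖g‖ ^ 2) := by
      field_simp
    rw [e3]
    rw [e4] at hsub
    linarith
  -- parameters
  set q : ℝ := Real.sqrt (α / L) with hqdef
  have hq0 : 0 < q := Real.sqrt_pos.mpr (by positivity)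
  have hq2 : q ^ 2 = α / L := Real.sq_sqrt (by positivity)
  have hq1 : q ≤ 1 := by nlinarith [hq2, div_le_one_of_le₀ hαL hL.le]
  set s : ℝ := q / α with hsdef
  have hs0 : 0 < s := by positivity
  have hq2L : q ^ 2 * L = α := by rw [hq2]; field_simp
  -- memberships in M (k+1)
  have hzbM : zb ∈ M (k + 1) := by
    have h := hM k hk 0 (-(1 / L))
    have heq : z k + (0 : ℝ) • (y k - z k) + (-(1 / L)) • g = zb := by
      rw [hzbdef]; module
    rwa [heq] at h
  have hpM : y k - s • g ∈ M (k + 1) := by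
    have h := hM k hk 1 (-s)
    have heq : z k + (1 : ℝ) • (y k - z k) + (-s) • g = y k - s • g := by module
    rwa [heq] at h
  -- distance inequality for y (k+1)
  have hy1R : ‖y (k + 1) - xstar‖ ^ 2
      ≤ ‖y k - xstar‖ ^ 2 - 2 * s * ⟪g, y k - xstar⟫ + s ^ 2 * ‖g‖ ^ 2 := by
    have h := hy1min _ hpM
    have heq : y k - s • g - xstar = (y k - xstar) - s • g := by module
    rw [heq] at h
    have h2 := pow_le_pow_left₀ (norm_nonneg _) h 2
    have hexp : ‖(y k - xstar) - s • g‖ ^ 2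
        = ‖y k - xstar‖ ^ 2 - 2 * s * ⟪g, y k - xstar⟫ + s ^ 2 * ‖g‖ ^ 2 := by
      rw [norm_sub_sq_real, real_inner_smul_right, norm_smul, Real.norm_eq_abs,
        abs_of_pos hs0, real_inner_comm (y k - xstar) g]
      ring
    rw [hexp] at h2
    exact h2
  -- lower bound on the inner product
  have hIb : (f zb + ψb) - (f xstar + ψs) + ‖g‖ ^ 2 / (2 * L)
      + α / 2 * ‖y k - xstar‖ ^ 2 ≤ ⟪g, y k - xstar⟫ := by
    have hsplit : ⟪g, y k - xstar⟫ = ⟪g, y k - z k⟫ + ⟪g, z k - xstar⟫ := by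
      rw [← inner_add_right]
      congr 1
      module
    have hzx : ⟪g, z k - xstar⟫ = -⟪g, xstar - z k⟫ := by
      rw [← inner_neg_right, neg_sub]
    have hnd : ‖y k - xstar‖ ^ 2 ≤ ‖xstar - z k‖ ^ 2 := by
      rw [norm_sub_rev xstar]
      exact pow_le_pow_left₀ (norm_nonneg _) (hymin (z k) hzM) 2
    have hnd2 : α / 2 * ‖y k - xstar‖ ^ 2 ≤ α / 2 * ‖xstar - z k‖ ^ 2 :=
      mul_le_mul_of_nonneg_left hnd (by positivity)
    rw [hsplit]
    linarith
  -- value of F at x (k+1)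
  have hFx1_ne_top : F (x (k + 1)) ≠ ⊤ := ne_top_of_le_ne_top hFzb_ne_top (hx1min zb hzbM)
  set C : ℝ := (F (x (k + 1))).toReal with hCdef
  have hFx1_eq : F (x (k + 1)) = (C : EReal) :=
    (EReal.coe_toReal hFx1_ne_top (hF_ne_bot _)).symm
  have hCle : C ≤ f zb + ψb := by
    have h := hx1min zb hzbM
    rw [hFb_eq] at h
    exact (EReal.toReal_le_toReal h (hF_ne_bot _) (EReal.coe_ne_top _)).trans_eq (EReal.toReal_coe _)
  -- the key real potential inequality
  have hKEY : ‖y (k + 1) - xstar‖ ^ 2 + 2 / α * (C - (f xstar + ψs))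
      ≤ (1 - q) * (‖y k - xstar‖ ^ 2 + 2 / α * ((f zb + ψb) - (f xstar + ψs))
          + ‖g‖ ^ 2 / (α * L)) := by
    have hC2 : 2 / α * (C - (f xstar + ψs)) ≤ 2 / α * ((f zb + ψb) - (f xstar + ψs)) :=
      mul_le_mul_of_nonneg_left (by linarith) (by positivity)
    have hI2 : -(2 * s * ⟪g, y k - xstar⟫)
        ≤ -(2 * s * ((f zb + ψb) - (f xstar + ψs) + ‖g‖ ^ 2 / (2 * L)
            + α / 2 * ‖y k - xstar‖ ^ 2)) := by
      have := mul_le_mul_of_nonneg_left hIb (by positivity : (0:ℝ) ≤ 2 * s)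
      linarith
    have hid : ‖y k - xstar‖ ^ 2 - 2 * s * ((f zb + ψb) - (f xstar + ψs)
          + ‖g‖ ^ 2 / (2 * L) + α / 2 * ‖y k - xstar‖ ^ 2)
          + s ^ 2 * ‖g‖ ^ 2 + 2 / α * ((f zb + ψb) - (f xstar + ψs))
        = (1 - q) * (‖y k - xstar‖ ^ 2 + 2 / α * ((f zb + ψb) - (f xstar + ψs))
          + ‖g‖ ^ 2 / (α * L)) := by
      rw [hsdef]
      field_simp
      linear_combination ‖g‖ ^ 2 * hq2L
    linarith
  -- conclude, splitting on whether F (x k) is finite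
  by_cases hxk : F (x k) = ⊤
  · rcases lt_or_eq_of_le hq1 with hqlt | hqeq
    · -- q < 1 : right-hand side is ⊤
      have h1 : F (x k) - F xstar = ⊤ := by
        rw [hxk, hFs_eq, EReal.top_sub_coe]
      have h2 : ((2 / α : ℝ) : EReal) * (F (x k) - F xstar) = ⊤ := by
        rw [h1, EReal.coe_mul_top_of_pos (by positivity)]
      have h3 : ((‖y k - xstar‖ ^ 2 : ℝ) : EReal)
          + ((2 / α : ℝ) : EReal) * (F (x k) - F xstar) = ⊤ := by
        rw [h2, EReal.coe_add_top]
      rw [h3, EReal.coe_mul_top_of_pos (by exact_mod_cast sub_pos.mpr hqlt)]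
      exact le_top
    · -- q = 1 : right-hand side is 0
      have h1q : (1 : ℝ) - q = 0 := by rw [← hqeq]; ring
      rw [h1q, EReal.coe_zero, zero_mul]
      have hK := hKEY
      rw [h1q, zero_mul] at hK
      rw [hFx1_eq, hFs_eq, ← EReal.coe_sub, ← EReal.coe_mul, ← EReal.coe_add]
      exact_mod_cast hK
  · -- finite case
    have hFxk_eq : F (x k) = (((F (x k)).toReal : ℝ) : EReal) :=
      (EReal.coe_toReal hxk (hF_ne_bot _)).symm
    set D : ℝ := (F (x k)).toReal with hDdef
    have hFbD : f zb + ψb ≤ D - 1 / (2 * L) * ‖g‖ ^ 2 := by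
      have h := hzF
      rw [hFb_eq, hFxk_eq, ← EReal.coe_sub, EReal.coe_le_coe_iff] at h
      exact h
    have hfinal : ‖y (k + 1) - xstar‖ ^ 2 + 2 / α * (C - (f xstar + ψs))
        ≤ (1 - q) * (‖y k - xstar‖ ^ 2 + 2 / α * (D - (f xstar + ψs))) := by
      have hident : 2 / α * (1 / (2 * L) * ‖g‖ ^ 2) = ‖g‖ ^ 2 / (α * L) := by
        field_simp
      have hstep : 2 / α * ((f zb + ψb) - (f xstar + ψs)) + ‖g‖ ^ 2 / (α * L)
          ≤ 2 / α * (D - (f xstar + ψs)) := by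
        have := mul_le_mul_of_nonneg_left hFbD (by positivity : (0:ℝ) ≤ 2 / α)
        nlinarith [hident]
      have hmul := mul_le_mul_of_nonneg_left
        (add_le_add (le_refl (‖y k - xstar‖ ^ 2)) hstep) (by linarith : (0:ℝ) ≤ 1 - q)
      calc ‖y (k + 1) - xstar‖ ^ 2 + 2 / α * (C - (f xstar + ψs))
          ≤ (1 - q) * (‖y k - xstar‖ ^ 2 + 2 / α * ((f zb + ψb) - (f xstar + ψs))
              + ‖g‖ ^ 2 / (α * L)) := hKEY
        _ ≤ (1 - q) * (‖y k - xstar‖ ^ 2 + 2 / α * (D - (f xstar + ψs))) := by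
            have e : ‖y k - xstar‖ ^ 2 + 2 / α * ((f zb + ψb) - (f xstar + ψs))
                + ‖g‖ ^ 2 / (α * L)
                = ‖y k - xstar‖ ^ 2 + (2 / α * ((f zb + ψb) - (f xstar + ψs))
                  + ‖g‖ ^ 2 / (α * L)) := by ring
            rw [e]
            exact hmul
    rw [hFx1_eq, hFs_eq, hFxk_eq, ← EReal.coe_sub, ← EReal.coe_sub, ← EReal.coe_mul,
      ← EReal.coe_mul, ← EReal.coe_add, ← EReal.coe_add, ← EReal.coe_mul]
    exact_mod_cast hfinal
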